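/- Let ℋ be a finite-dimensional complex Hilbert space, H ∈ B(ℋ) self-adjoint, and suppose σ_*(H) = I ∩ σ(H) for some interval I ⊆ ℝ, with gap g := dist(σ_*(H), σ(H)∖σ_*(H)) > 0, and let P_* be the spectral projection of H associated with σ_*(H). Let W : ℝ → ℂ be Lebesgue integrable with Ŵ(ω) = −i/(√(2π)·ω) for all ω ∈ ℝ with |ω| ≥ g, and define ℐ_H(A) := ∫_ℝ W(s)·e^{iHs}·A·e^{−iHs} ds. Then for every A ∈ B(ℋ) with P_*AP_* = 0 and (1−P_*)A(1−P_*) = 0, one has −i[H, ℐ_H(A)] = A and ℐ_H(−i[H,A]) = A. (Lemma D.1, first part: ℐ_H inverts the Liouvillian on off-diagonal operators.) -/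

import Mathlib

open scoped BigOperators ComplexConjugate

noncomputable section

variable {ℋ : Type*} [NormedAddCommGroup ℋ] [InnerProductSpace ℂ ℋ] [FiniteDimensional ℂ ℋ]

/-- The orthogonal projection onto a subspace `K`, as an operator on `ℋ`. -/
noncomputable def orthProj (K : Submodule ℂ ℋ) : ℋ →L[ℂ] ℋ :=
  K.subtypeL.comp K.orthogonalProjectionOnto

/-- The spectral projection of `H` associated with a set `S ⊆ ℝ`: the orthogonal projection
onto the span of all eigenvectors of `H` with eigenvalue in `S`. -/
noncomputable def spectralProj (H : ℋ →L[ℂ] ℋ) (S : Set ℝ) : ℋ →L[ℂ] ℋ :=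
  orthProj (⨆ μ ∈ S, Module.End.eigenspace (H : ℋ →ₗ[ℂ] ℋ) (μ : ℂ))

/-- An operator `A` is off-diagonal with respect to a projection `P` if `PAP = 0` and
`(1−P)A(1−P) = 0`. -/
def IsOffDiagonal (P A : ℋ →L[ℂ] ℋ) : Prop :=
  P * A * P = 0 ∧ (1 - P) * A * (1 - P) = 0

/-- The set of (real) eigenvalues of `H`. -/
def realEigenvalues (H : ℋ →L[ℂ] ℋ) : Set ℝ :=
  {μ : ℝ | Module.End.HasEigenvalue (H : ℋ →ₗ[ℂ] ℋ) (μ : ℂ)}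

/-- The Fourier transform `Ŵ(ω) = (2π)^{-1/2} ∫ W(s) e^{−iωs} ds`. -/
noncomputable def fhat (W : ℝ → ℂ) (ω : ℝ) : ℂ :=
  (Real.sqrt (2 * Real.pi) : ℂ)⁻¹ * ∫ s : ℝ, Complex.exp (-(Complex.I * ω * s)) * W s

/-- The map `ℐ_H(A) = ∫ W(s) e^{iHs} A e^{−iHs} ds`. -/
noncomputable def invLiouville (W : ℝ → ℂ) (H A : ℋ →L[ℂ] ℋ) : ℋ →L[ℂ] ℋ :=
  ∫ s : ℝ, W s • (NormedSpace.exp ((s : ℂ) • (Complex.I • H)) * A *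
    NormedSpace.exp ((-s : ℂ) • (Complex.I • H)))

/-! ### Auxiliary material -/

namespace Statement15Aux

open MeasureTheory ContinuousLinearMap

local notation "⟪" x ", " y "⟫" => @inner ℂ _ _ x y

noncomputable instance instRatNormedAlgebraOp : NormedAlgebra ℚ (ℋ →L[ℂ] ℋ) :=
  NormedAlgebra.restrictScalars ℚ ℂ _

/-- `e^{isH}` as an operator. -/
noncomputable def expH (H : ℋ →L[ℂ] ℋ) (s : ℝ) : ℋ →L[ℂ] ℋ :=
  NormedSpace.exp ((s : ℂ) • (Complex.I • H))

lemma exp_apply_eigvec (T : ℋ →L[ℂ] ℋ) (v : ℋ) (c : ℂ) (h : T v = c • v) :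
    NormedSpace.exp T v = Complex.exp c • v := by
  have hpow : ∀ n : ℕ, (T ^ n) v = c ^ n • v := by
    intro n
    induction n with
    | zero => simp
    | succ n ih =>
      rw [pow_succ, ContinuousLinearMap.mul_apply, h, ContinuousLinearMap.map_smul, ih, smul_smul, ← pow_succ']
  have hs : Summable fun n : ℕ => ((Nat.factorial n : ℂ))⁻¹ • T ^ n :=
    NormedSpace.expSeries_summable' T
  have key := (ContinuousLinearMap.apply ℂ ℋ v).map_tsum hs
  rw [NormedSpace.exp_eq_tsum ℂ]
  simp only [ContinuousLinearMap.apply_apply] at key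
  simp only []
  rw [show ((fun x : ℋ →L[ℂ] ℋ => ∑' (n : ℕ), ((Nat.factorial n : ℂ))⁻¹ • x ^ n) T) v
      = (∑' (n : ℕ), ((Nat.factorial n : ℂ))⁻¹ • T ^ n) v from rfl, key]
  simp only [ContinuousLinearMap.coe_smul', Pi.smul_apply, hpow, smul_smul]
  rw [Complex.exp_eq_exp_ℂ, NormedSpace.exp_eq_tsum ℂ, ← Summable.tsum_smul_const]
  · simp [smul_smul]
  · exact NormedSpace.expSeries_summable' c

variable (H : ℋ →L[ℂ] ℋ)

lemma star_expH (hH : IsSelfAdjoint H) (s : ℝ) : star (expH H s) = expH H (-s) := by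
  rw [expH, expH, NormedSpace.star_exp]
  congr 1
  rw [star_smul, star_smul, hH.star_eq, Complex.star_def, Complex.conj_I,
    Complex.conj_ofReal, smul_smul, smul_smul]
  congr 1
  push_cast
  ring

lemma expH_mul (s t : ℝ) : expH H s * expH H t = expH H (s + t) := by
  rw [expH, expH, expH, ← NormedSpace.exp_add_of_commute]
  · congr 1
    push_cast
    rw [add_smul]
  · exact (((Commute.refl (Complex.I • H)).smul_left _).smul_right _)

lemma expH_inv (s : ℝ) : expH H (-s) * expH H s = 1 := by
  rw [expH_mul, show -s + s = 0 by ring]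
  simpa [expH] using NormedSpace.exp_zero (𝔸 := ℋ →L[ℂ] ℋ)

lemma adjoint_expH (hH : IsSelfAdjoint H) (s : ℝ) :
    ContinuousLinearMap.adjoint (expH H s) = expH H (-s) := by
  rw [← ContinuousLinearMap.star_eq_adjoint, star_expH H hH]

lemma norm_expH_apply (hH : IsSelfAdjoint H) (s : ℝ) (x : ℋ) : ‖expH H s x‖ = ‖x‖ := by
  have h1 : ⟪expH H s x, expH H s x⟫ = ⟪x, x⟫ := by
    rw [← ContinuousLinearMap.adjoint_inner_left, adjoint_expH H hH,
      ← ContinuousLinearMap.mul_apply, expH_inv]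
    simp
  have h2 : ‖expH H s x‖ ^ 2 = ‖x‖ ^ 2 := by
    rw [← @inner_self_eq_norm_sq ℂ, ← @inner_self_eq_norm_sq ℂ, h1]
  calc ‖expH H s x‖ = Real.sqrt (‖expH H s x‖ ^ 2) := (Real.sqrt_sq (norm_nonneg _)).symm
    _ = Real.sqrt (‖x‖ ^ 2) := by rw [h2]
    _ = ‖x‖ := Real.sqrt_sq (norm_nonneg _)

lemma norm_expH_le (hH : IsSelfAdjoint H) (s : ℝ) : ‖expH H s‖ ≤ 1 :=
  ContinuousLinearMap.opNorm_le_bound _ zero_le_one fun x => by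
    rw [norm_expH_apply H hH, one_mul]

set_option maxHeartbeats 1000000 in
lemma integrable_aux (hH : IsSelfAdjoint H) {W : ℝ → ℂ} (hWint : Integrable W)
    (A : ℋ →L[ℂ] ℋ) :
    Integrable fun s : ℝ => W s • (expH H s * A * expH H (-s)) := by
  have hcont : Continuous fun s : ℝ => expH H s * A * expH H (-s) := by
    have h1 : Continuous fun s : ℝ => expH H s := by
      apply NormedSpace.exp_continuous.comp
      exact (Complex.continuous_ofReal.smul continuous_const)
    have h2 : Continuous fun s : ℝ => expH H (-s) := h1.comp continuous_neg
    exact (h1.mul continuous_const).mul h2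
  refine Integrable.mono' (hWint.norm.const_mul ‖A‖)
    (hWint.aestronglyMeasurable.smul hcont.aestronglyMeasurable)
    (Filter.Eventually.of_forall fun s => ?_)
  calc ‖W s • (expH H s * A * expH H (-s))‖
      ≤ ‖W s‖ * ‖expH H s * A * expH H (-s)‖ := ContinuousLinearMap.opNorm_smul_le _ _
    _ ≤ ‖W s‖ * (‖expH H s * A‖ * ‖expH H (-s)‖) :=
        mul_le_mul_of_nonneg_left (norm_mul_le _ _) (norm_nonneg _)
    _ ≤ ‖W s‖ * ((‖expH H s‖ * ‖A‖) * ‖expH H (-s)‖) := by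
        apply mul_le_mul_of_nonneg_left _ (norm_nonneg _)
        exact mul_le_mul_of_nonneg_right (norm_mul_le _ _) (norm_nonneg _)
    _ ≤ ‖W s‖ * ((1 * ‖A‖) * 1) := by
        apply mul_le_mul_of_nonneg_left _ (norm_nonneg _)
        apply mul_le_mul (mul_le_mul_of_nonneg_right (norm_expH_le H hH s) (norm_nonneg _))
          (norm_expH_le H hH (-s)) (norm_nonneg _)
        positivity
    _ = ‖A‖ * ‖W s‖ := by ring

lemma expH_apply_eigvec (s : ℝ) {v : ℋ} {a : ℝ} (hv : H v = (a : ℂ) • v) :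
    expH H s v = Complex.exp (Complex.I * a * s) • v := by
  rw [expH, exp_apply_eigvec ((s : ℂ) • (Complex.I • H)) v (Complex.I * a * s)]
  rw [ContinuousLinearMap.smul_apply, ContinuousLinearMap.smul_apply, hv, smul_smul, smul_smul]
  congr 1
  ring

lemma inner_expH_left (hH : IsSelfAdjoint H) (s : ℝ) {v : ℋ} {a : ℝ}
    (hv : H v = (a : ℂ) • v) (y : ℋ) :
    ⟪v, expH H s y⟫ = Complex.exp (Complex.I * a * s) * ⟪v, y⟫ := by
  rw [← ContinuousLinearMap.adjoint_inner_left, adjoint_expH H hH,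
    expH_apply_eigvec H (-s) hv, inner_smul_left]
  congr 1
  rw [← Complex.exp_conj]
  congr 1
  simp only [map_mul, Complex.conj_I, Complex.conj_ofReal]
  push_cast
  ring

lemma inner_H_left (hH : IsSelfAdjoint H) {v : ℋ} {a : ℝ} (hv : H v = (a : ℂ) • v) (y : ℋ) :
    ⟪v, H y⟫ = (a : ℂ) * ⟪v, y⟫ := by
  rw [← ContinuousLinearMap.adjoint_inner_left, hH.adjoint_eq, hv, inner_smul_left,
    Complex.conj_ofReal]

lemma matrix_elem (hH : IsSelfAdjoint H) {W : ℝ → ℂ} (hWint : Integrable W)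
    (A : ℋ →L[ℂ] ℋ) {v w : ℋ} {a b : ℝ}
    (hv : H v = (a : ℂ) • v) (hw : H w = (b : ℂ) • w) :
    ⟪v, invLiouville W H A w⟫
      = (∫ s : ℝ, W s * Complex.exp (Complex.I * (a - b) * s)) * ⟪v, A w⟫ := by
  set φ : (ℋ →L[ℂ] ℋ) →L[ℂ] ℂ := (innerSL ℂ v).comp (ContinuousLinearMap.apply ℂ ℋ w) with hφ
  have h0 : ⟪v, invLiouville W H A w⟫ = φ (invLiouville W H A) := rfl
  have hint : Integrable fun s : ℝ => W s • (expH H s * A * expH H (-s)) :=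
    integrable_aux H hH hWint A
  have h1 : invLiouville W H A = ∫ s : ℝ, W s • (expH H s * A * expH H (-s)) := by
    rw [invLiouville]
    refine congrArg _ (funext fun s => ?_)
    simp only [expH, Complex.ofReal_neg]
  rw [h0, h1, ← φ.integral_comp_comm hint]
  have h2 : ∀ s : ℝ, φ (W s • (expH H s * A * expH H (-s)))
      = (W s * Complex.exp (Complex.I * (a - b) * s)) • ⟪v, A w⟫ := by
    intro s
    have : φ (W s • (expH H s * A * expH H (-s)))
        = W s * ⟪v, expH H s (A (expH H (-s) w))⟫ := by
      simp [hφ, ContinuousLinearMap.mul_apply, inner_smul_right]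
    rw [this, expH_apply_eigvec H (-s) hw, A.map_smul, (expH H s).map_smul, inner_smul_right,
      inner_expH_left H hH s hv]
    have he : Complex.exp (Complex.I * (b : ℂ) * ((-s : ℝ) : ℂ)) *
        Complex.exp (Complex.I * (a : ℂ) * (s : ℂ))
        = Complex.exp (Complex.I * ((a : ℂ) - (b : ℂ)) * (s : ℂ)) := by
      rw [← Complex.exp_add]
      congr 1
      push_cast
      ring
    rw [smul_eq_mul, ← he]
    ring
  rw [MeasureTheory.integral_congr_ae (Filter.Eventually.of_forall h2),
    integral_smul_const, smul_eq_mul]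

lemma ext_of_inner {ι : Type*} [Fintype ι] (B : OrthonormalBasis ι ℂ ℋ) (T S : ℋ →L[ℂ] ℋ)
    (h : ∀ i j, ⟪B i, T (B j)⟫ = ⟪B i, S (B j)⟫) : T = S := by
  apply ContinuousLinearMap.coe_injective
  apply Module.Basis.ext B.toBasis
  intro j
  apply B.repr.injective
  ext i
  simp only [OrthonormalBasis.coe_toBasis, ContinuousLinearMap.coe_coe]
  rw [B.repr_apply_apply, B.repr_apply_apply]
  exact h i j

lemma integral_W_exp {g : ℝ} {W : ℝ → ℂ}
    (hW : ∀ ω : ℝ, g ≤ |ω| →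
      fhat W ω = -Complex.I / ((Real.sqrt (2 * Real.pi) : ℂ) * (ω : ℂ)))
    (hg : 0 < g) (ω : ℝ) (hω : g ≤ |ω|) :
    ∫ s : ℝ, W s * Complex.exp (Complex.I * (ω : ℂ) * (s : ℂ)) = Complex.I / (ω : ℂ) := by
  have hω0 : ω ≠ 0 := by
    intro h0
    rw [h0] at hω
    simp at hω
    linarith
  have hωC : ((ω : ℝ) : ℂ) ≠ 0 := by exact_mod_cast hω0
  have hs : (0 : ℝ) < Real.sqrt (2 * Real.pi) := Real.sqrt_pos.mpr (by positivity)
  have hsC : ((Real.sqrt (2 * Real.pi) : ℝ) : ℂ) ≠ 0 := by exact_mod_cast hs.ne'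
  have h := hW (-ω) (by rwa [abs_neg])
  rw [fhat] at h
  have hfun : (fun s : ℝ => Complex.exp (-(Complex.I * ((-ω : ℝ) : ℂ) * (s : ℂ))) * W s)
      = fun s : ℝ => W s * Complex.exp (Complex.I * (ω : ℂ) * (s : ℂ)) := by
    funext s
    rw [mul_comm]
    congr 2
    push_cast
    ring
  rw [hfun] at h
  have h2 : ∫ s : ℝ, W s * Complex.exp (Complex.I * (ω : ℂ) * (s : ℂ))
      = ((Real.sqrt (2 * Real.pi) : ℝ) : ℂ) *
        (((Real.sqrt (2 * Real.pi) : ℝ) : ℂ)⁻¹ *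
          ∫ s : ℝ, W s * Complex.exp (Complex.I * (ω : ℂ) * (s : ℂ))) := by
    rw [← mul_assoc, mul_inv_cancel₀ hsC, one_mul]
  rw [h2, h, Complex.ofReal_neg, mul_div_assoc', mul_div_mul_left _ _ hsC, neg_div_neg_eq]

end Statement15Aux

/-- Lemma D.1, first part. If `σ_*(H) = I ∩ σ(H)` for an interval `I`, the
gap `g > 0`, and `Ŵ(ω) = −i/(√(2π)·ω)` for `|ω| ≥ g`, then `ℐ_H` inverts the Liouvillian
`A ↦ −i[H,A]` on operators that are off-diagonal with respect to the spectral projection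
`P_*`. -/
theorem statement15 (H : ℋ →L[ℂ] ℋ) (hH : IsSelfAdjoint H)
    (σstar : Set ℝ)
    (hI : ∃ I : Set ℝ, I.OrdConnected ∧ σstar = I ∩ realEigenvalues H)
    (g : ℝ) (hg : 0 < g)
    (hgap : ∀ μ ∈ σstar, ∀ ν ∈ realEigenvalues H \ σstar, g ≤ |μ - ν|)
    (W : ℝ → ℂ) (hWint : MeasureTheory.Integrable W)
    (hW : ∀ ω : ℝ, g ≤ |ω| →
      fhat W ω = -Complex.I / ((Real.sqrt (2 * Real.pi) : ℂ) * (ω : ℂ)))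
    (A : ℋ →L[ℂ] ℋ) (hA : IsOffDiagonal (spectralProj H σstar) A) :
    (-Complex.I) • (H * invLiouville W H A - invLiouville W H A * H) = A ∧
    invLiouville W H ((-Complex.I) • (H * A - A * H)) = A := by
  classical
  obtain ⟨hA1, hA2⟩ := hA
  have hSym := hH.isSymmetric
  have hn : Module.finrank ℂ ℋ = Module.finrank ℂ ℋ := rfl
  set B := hSym.eigenvectorBasis hn with hB
  set μ := hSym.eigenvalues hn with hμdef
  have hBv : ∀ i, H (B i) = ((μ i : ℝ) : ℂ) • B i := by
    intro i
    exact hSym.apply_eigenvectorBasis hn i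
  have hBmem : ∀ i, B i ∈ Module.End.eigenspace (H : ℋ →ₗ[ℂ] ℋ) ((μ i : ℝ) : ℂ) := fun i =>
    (hSym.hasEigenvector_eigenvectorBasis hn i).1
  have hBeig : ∀ i, μ i ∈ realEigenvalues H := fun i => hSym.hasEigenvalue_eigenvalues hn i
  set K := ⨆ ν ∈ σstar, Module.End.eigenspace (H : ℋ →ₗ[ℂ] ℋ) (ν : ℂ) with hKdef
  have hPapp : ∀ x : ℋ, spectralProj H σstar x = ((K.orthogonalProjectionOnto x : ℋ)) :=
    fun x => rfl
  have hmemK : ∀ i, μ i ∈ σstar → B i ∈ K := fun i hi =>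
    (le_iSup₂ (f := fun ν (_ : ν ∈ σstar) =>
      Module.End.eigenspace (H : ℋ →ₗ[ℂ] ℋ) (ν : ℂ)) (μ i) hi) (hBmem i)
  have horth : ∀ i, μ i ∉ σstar → B i ∈ Kᗮ := by
    intro i hi
    have hKle : K ≤ (Module.End.eigenspace (H : ℋ →ₗ[ℂ] ℋ) ((μ i : ℝ) : ℂ))ᗮ := by
      refine iSup₂_le fun ν hν => ?_
      intro x hx
      rw [Submodule.mem_orthogonal]
      intro y hy
      refine hSym.orthogonalFamily_eigenspaces ?_ ⟨y, hy⟩ ⟨x, hx⟩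
      intro hc
      apply hi
      have : μ i = ν := by exact_mod_cast hc
      rwa [this]
    rw [Submodule.mem_orthogonal]
    intro u hu
    exact inner_eq_zero_symm.mp (((Submodule.mem_orthogonal _ _).mp (hKle hu)) (B i) (hBmem i))
  have hPin : ∀ i, μ i ∈ σstar → spectralProj H σstar (B i) = B i := by
    intro i hi
    rw [hPapp]; refine (Submodule.starProjection_eq_self_iff (K := K)).mpr ?_
    exact hmemK i hi
  have hPout : ∀ i, μ i ∉ σstar → spectralProj H σstar (B i) = 0 := by
    intro i hi
    rw [hPapp, Submodule.orthogonalProjectionOnto_apply_of_mem_orthogonal (horth i hi)]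
    rfl
  have hAzero : ∀ i j, (μ i ∈ σstar ↔ μ j ∈ σstar) →
      (inner ℂ (B i) (A (B j)) : ℂ) = 0 := by
    intro i j hij
    by_cases hj : μ j ∈ σstar
    · have hi := hij.mpr hj
      have h1 : spectralProj H σstar (A (B j)) = 0 := by
        have h0 := congrArg (fun T : ℋ →L[ℂ] ℋ => T (B j)) hA1
        simpa [ContinuousLinearMap.mul_apply, hPin j hj] using h0
      have h2 : A (B j) ∈ Kᗮ := by
        rw [hPapp] at h1
        exact Submodule.orthogonalProjectionOnto_eq_zero_iff.mp (by exact_mod_cast h1)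
      exact Submodule.inner_right_of_mem_orthogonal (hmemK i hi) h2
    · have hi : μ i ∉ σstar := fun h => hj (hij.mp h)
      have h1 : (1 - spectralProj H σstar) (A (B j)) = 0 := by
        have h0 := congrArg (fun T : ℋ →L[ℂ] ℋ => T (B j)) hA2
        simpa [ContinuousLinearMap.mul_apply, ContinuousLinearMap.sub_apply,
          ContinuousLinearMap.one_apply, hPout j hj] using h0
      have h2 : A (B j) = spectralProj H σstar (A (B j)) := by
        rwa [ContinuousLinearMap.sub_apply, ContinuousLinearMap.one_apply, sub_eq_zero] at h1
      have h3 : A (B j) ∈ K := by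
        rw [h2, hPapp]
        exact (K.orthogonalProjectionOnto (A (B j))).2
      exact Submodule.inner_left_of_mem_orthogonal h3 (horth i hi)
  have hcross : ∀ i j, ¬(μ i ∈ σstar ↔ μ j ∈ σstar) →
      (∫ s : ℝ, W s * Complex.exp (Complex.I * ((μ i : ℂ) - (μ j : ℂ)) * (s : ℂ)))
        = Complex.I / ((μ i : ℂ) - (μ j : ℂ)) := by
    intro i j hij
    have hgle : g ≤ |μ i - μ j| := by
      by_cases hi : μ i ∈ σstar
      · have hj : μ j ∉ σstar := fun h => hij ⟨fun _ => h, fun _ => hi⟩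
        exact hgap (μ i) hi (μ j) ⟨hBeig j, hj⟩
      · have hj : μ j ∈ σstar := by
          by_contra hj
          exact hij ⟨fun h => absurd h hi, fun h => absurd h hj⟩
        rw [abs_sub_comm]
        exact hgap (μ j) hj (μ i) ⟨hBeig i, hi⟩
    have h := Statement15Aux.integral_W_exp hW hg (μ i - μ j) hgle
    rw [show ((μ i - μ j : ℝ) : ℂ) = (μ i : ℂ) - (μ j : ℂ) by push_cast; ring] at h
    exact h
  have hne : ∀ i j, ¬(μ i ∈ σstar ↔ μ j ∈ σstar) → (μ i : ℂ) - (μ j : ℂ) ≠ 0 := by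
    intro i j hij hc
    have hij' : μ i = μ j := by exact_mod_cast sub_eq_zero.mp hc
    exact hij (by rw [hij'])
  have hcomm : ∀ (A' : ℋ →L[ℂ] ℋ) i j,
      (inner ℂ (B i) ((H * A' - A' * H) (B j)) : ℂ)
        = ((μ i : ℂ) - (μ j : ℂ)) * inner ℂ (B i) (A' (B j)) := by
    intro A' i j
    rw [ContinuousLinearMap.sub_apply, inner_sub_right, ContinuousLinearMap.mul_apply,
      ContinuousLinearMap.mul_apply, Statement15Aux.inner_H_left H hH (hBv i), hBv j, A'.map_smul,
      inner_smul_right]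
    ring
  have hM : ∀ (A' : ℋ →L[ℂ] ℋ) i j,
      (inner ℂ (B i) (invLiouville W H A' (B j)) : ℂ)
        = (∫ s : ℝ, W s * Complex.exp (Complex.I * ((μ i : ℂ) - (μ j : ℂ)) * (s : ℂ)))
          * inner ℂ (B i) (A' (B j)) :=
    fun A' i j => Statement15Aux.matrix_elem H hH hWint A' (hBv i) (hBv j)
  constructor
  · refine Statement15Aux.ext_of_inner B _ _ fun i j => ?_
    rw [ContinuousLinearMap.smul_apply, inner_smul_right, hcomm (invLiouville W H A) i j,
      hM A i j]
    by_cases hij : (μ i ∈ σstar ↔ μ j ∈ σstar)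
    · rw [hAzero i j hij]
      ring
    · rw [hcross i j hij]
      have h0 := hne i j hij
      field_simp
      ring_nf
      simp [Complex.I_sq]
  · refine Statement15Aux.ext_of_inner B _ _ fun i j => ?_
    rw [hM ((-Complex.I) • (H * A - A * H)) i j, ContinuousLinearMap.smul_apply,
      inner_smul_right, hcomm A i j]
    by_cases hij : (μ i ∈ σstar ↔ μ j ∈ σstar)
    · rw [hAzero i j hij]
      ring
    · rw [hcross i j hij]
      have h0 := hne i j hij
      field_simp
      ring_nf
      simp [Complex.I_sq]
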